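/- Let $a_n$ be the coefficient of $x^n y^n$ in the formal power series $1 - \sqrt{1-2x-2y+y^2}$. Then $a_0 = 0$, $a_1 = 1$, and for all $n \ge 1$, $a_{n+1} = \frac{3}{2}\cdot\frac{(3n-1)(3n+1)}{(n+1)^2} a_n$; equivalently $2(n+1)^2 a_{n+1} = 3(3n-1)(3n+1) a_n$. -/

import Mathlib

open Finset

noncomputable def dd (i j : ℕ) : Fin 2 →₀ ℕ := Finsupp.single 0 i + Finsupp.single 1 j

lemma dd_apply0 (i j : ℕ) : dd i j 0 = i := by
  simp [dd, Finsupp.single_apply]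

lemma dd_apply1 (i j : ℕ) : dd i j 1 = j := by
  simp [dd, Finsupp.single_apply]

lemma dd_eq (m : Fin 2 →₀ ℕ) : dd (m 0) (m 1) = m := by
  ext s
  fin_cases s
  · exact dd_apply0 _ _
  · exact dd_apply1 _ _

lemma dd_inj {i j i' j' : ℕ} (h : dd i j = dd i' j') : i = i' ∧ j = j' := by
  constructor
  · rw [← dd_apply0 i j, h, dd_apply0]
  · rw [← dd_apply1 i j, h, dd_apply1]

lemma dd_add (i j i' j' : ℕ) : dd i j + dd i' j' = dd (i + i') (j + j') := by
  ext s
  fin_cases s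
  · simp [dd_apply0]
  · simp [dd_apply1]

lemma coeff_mul_dd (f g : MvPowerSeries (Fin 2) ℚ) (i j : ℕ) :
    MvPowerSeries.coeff (dd i j) (f * g) =
      ∑ p ∈ Finset.HasAntidiagonal.antidiagonal i ×ˢ Finset.HasAntidiagonal.antidiagonal j,
        MvPowerSeries.coeff (dd p.1.1 p.2.1) f * MvPowerSeries.coeff (dd p.1.2 p.2.2) g := by
  rw [MvPowerSeries.coeff_mul]
  refine Finset.sum_nbij' (i := fun p => ((p.1 0, p.2 0), (p.1 1, p.2 1)))
    (j := fun q => (dd q.1.1 q.2.1, dd q.1.2 q.2.2)) ?_ ?_ ?_ ?_ ?_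
  · intro p hp
    rw [Finset.HasAntidiagonal.mem_antidiagonal] at hp
    simp only [Finset.mem_product, Finset.HasAntidiagonal.mem_antidiagonal]
    constructor
    · have := congrArg (fun m => m 0) hp
      simpa [dd_apply0] using this
    · have := congrArg (fun m => m 1) hp
      simpa [dd_apply1] using this
  · intro q hq
    simp only [Finset.mem_product, Finset.HasAntidiagonal.mem_antidiagonal] at hq
    rw [Finset.HasAntidiagonal.mem_antidiagonal, dd_add, hq.1, hq.2]
  · intro p hp
    simp only [dd_eq]
  · intro q hq
    simp [dd_apply0, dd_apply1]
  · intro p hp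
    simp only [dd_eq]

lemma dd_eq_zero_iff (i j : ℕ) : dd i j = 0 ↔ i = 0 ∧ j = 0 := by
  constructor
  · intro h
    have : dd i j = dd 0 0 := by simpa [dd] using h
    exact dd_inj this
  · rintro ⟨rfl, rfl⟩
    simp [dd]

lemma dd_eq_single0_iff (i j n : ℕ) : dd i j = Finsupp.single 0 n ↔ i = n ∧ j = 0 := by
  have h0 : Finsupp.single (0 : Fin 2) n = dd n 0 := by simp [dd]
  rw [h0]
  exact ⟨dd_inj, by rintro ⟨rfl, rfl⟩; rfl⟩

lemma dd_eq_single1_iff (i j n : ℕ) : dd i j = Finsupp.single 1 n ↔ i = 0 ∧ j = n := by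
  have h0 : Finsupp.single (1 : Fin 2) n = dd 0 n := by simp [dd]
  rw [h0]
  exact ⟨dd_inj, by rintro ⟨rfl, rfl⟩; rfl⟩

noncomputable def fc : ℕ → ℕ → ℚ
  | 0, j => if j = 1 then 1 else 0
  | (k+1), j => catalan k * ((2*k + j).choose j) / 2^k

lemma fc_zero (j : ℕ) : fc 0 j = if j = 1 then 1 else 0 := rfl
lemma fc_succ (k j : ℕ) : fc (k+1) j = catalan k * ((2*k + j).choose j) / 2^k := rfl
lemma fc_zero_zero : fc 0 0 = 0 := rfl
lemma fc_one (j : ℕ) : fc 1 j = 1 := by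
  rw [fc_succ]; simp

lemma inner_left_zero (m : ℕ) : ∑ q ∈ antidiagonal 0, fc 0 q.1 * fc m q.2 = 0 := by
  simp [Finset.Nat.antidiagonal_zero, fc_zero_zero]

lemma inner_left_succ (m j : ℕ) :
    ∑ q ∈ antidiagonal (j+1), fc 0 q.1 * fc m q.2 = fc m j := by
  rw [Finset.sum_eq_single_of_mem (1, j) (by simp [Finset.HasAntidiagonal.mem_antidiagonal, Nat.add_comm])]
  · rw [fc_zero]; simp
  · rintro ⟨q1, q2⟩ hq hne
    have hq' : q1 + q2 = j + 1 := Finset.HasAntidiagonal.mem_antidiagonal.mp hq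
    have h1 : q1 ≠ 1 := by
      rintro rfl
      exact hne (by rw [Prod.mk.injEq]; omega)
    rw [fc_zero, if_neg h1, zero_mul]

lemma inner_right_zero (m : ℕ) : ∑ q ∈ antidiagonal 0, fc m q.1 * fc 0 q.2 = 0 := by
  simp [Finset.Nat.antidiagonal_zero, fc_zero_zero]

lemma inner_right_succ (m j : ℕ) :
    ∑ q ∈ antidiagonal (j+1), fc m q.1 * fc 0 q.2 = fc m j := by
  rw [Finset.sum_eq_single_of_mem (j, 1) (by simp [Finset.HasAntidiagonal.mem_antidiagonal])]
  · rw [fc_zero]; simp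
  · rintro ⟨q1, q2⟩ hq hne
    have hq' : q1 + q2 = j + 1 := Finset.HasAntidiagonal.mem_antidiagonal.mp hq
    have h1 : q2 ≠ 1 := by
      rintro rfl
      exact hne (by rw [Prod.mk.injEq]; omega)
    rw [fc_zero, if_neg h1, mul_zero]

lemma vand (a b j : ℕ) :
    ∑ p ∈ Finset.HasAntidiagonal.antidiagonal j, (a + p.1).choose p.1 * (b + p.2).choose p.2
      = (a + b + 1 + j).choose j := by
  have h : (PowerSeries.invOneSubPow ℤ (a+1)) * (PowerSeries.invOneSubPow ℤ (b+1)) = PowerSeries.invOneSubPow ℤ (a+b+1+1) := by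
    rw [PowerSeries.invOneSubPow_eq_inv_one_sub_pow, PowerSeries.invOneSubPow_eq_inv_one_sub_pow,
      PowerSeries.invOneSubPow_eq_inv_one_sub_pow, ← pow_add]
    ring_nf
  have h2 := congrArg (fun u : (PowerSeries ℤ)ˣ => PowerSeries.coeff j u.val) h
  simp only [Units.val_mul, PowerSeries.coeff_mul,
    PowerSeries.invOneSubPow_val_succ_eq_mk_add_choose, PowerSeries.coeff_mk] at h2
  have h3 : ∑ p ∈ Finset.HasAntidiagonal.antidiagonal j, (a + p.1).choose a * (b + p.2).choose b
      = ((a + b + 1 + j).choose (a+b+1)) := by exact_mod_cast h2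
  calc ∑ p ∈ Finset.HasAntidiagonal.antidiagonal j, (a + p.1).choose p.1 * (b + p.2).choose p.2
      = ∑ p ∈ Finset.HasAntidiagonal.antidiagonal j, (a + p.1).choose a * (b + p.2).choose b := by
        refine Finset.sum_congr rfl fun p _ => ?_
        rw [Nat.choose_symm_add, Nat.choose_symm_add]
    _ = (a + b + 1 + j).choose j := by rw [h3, Nat.add_comm (a+b+1) j, Nat.choose_symm_add]

lemma inner_mid (k l j : ℕ) :
    ∑ q ∈ antidiagonal j, fc (k+1) q.1 * fc (l+1) q.2
      = catalan k * catalan l * ((2*k + 2*l + 1 + j).choose j) / 2^(k+l) := by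
  have : ∀ q ∈ antidiagonal j, fc (k+1) q.1 * fc (l+1) q.2
      = (catalan k * catalan l / 2^(k+l)) *
        (((2*k + q.1).choose q.1 : ℚ) * ((2*l + q.2).choose q.2 : ℚ)) := by
    intro q _
    rw [fc_succ, fc_succ]
    rw [pow_add]
    ring
  rw [Finset.sum_congr rfl this, ← Finset.mul_sum]
  rw [show ∑ q ∈ antidiagonal j, (((2*k + q.1).choose q.1 : ℚ) * ((2*l + q.2).choose q.2 : ℚ))
      = ((2*k + 2*l + 1 + j).choose j : ℚ) by exact_mod_cast congrArg (Nat.cast (R := ℚ)) (vand (2*k) (2*l) j)]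
  ring

lemma conv_id (i j : ℕ) :
    ∑ p ∈ antidiagonal i ×ˢ antidiagonal j, fc p.1.1 p.2.1 * fc p.1.2 p.2.2
      = 2 * fc i j - 2 * (if i = 1 ∧ j = 0 then 1 else 0)
        - 2 * (if i = 0 ∧ j = 1 then 1 else 0) + (if i = 0 ∧ j = 2 then 1 else 0) := by
  rw [Finset.sum_product]
  match i with
  | 0 =>
    rw [Finset.Nat.antidiagonal_zero, Finset.sum_singleton]
    match j with
    | 0 => rw [inner_left_zero]; norm_num [fc_zero_zero]
    | 1 => rw [inner_left_succ]; norm_num [fc_zero]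
    | 2 => rw [inner_left_succ]; norm_num [fc_zero]
    | (j'+3) => rw [inner_left_succ]; simp [fc_zero]
  | 1 =>
    rw [show (1:ℕ) = 0 + 1 from rfl, Finset.Nat.antidiagonal_succ]
    rw [Finset.sum_cons, Finset.Nat.antidiagonal_zero, Finset.sum_map, Finset.sum_singleton]
    simp only [Function.Embedding.coe_prodMap, Function.Embedding.coeFn_mk,
      Function.Embedding.refl_apply, Prod.map_apply]
    match j with
    | 0 =>
      rw [inner_left_zero, inner_right_zero]
      norm_num [fc_one]
    | (j'+1) =>
      rw [inner_left_succ, inner_right_succ]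
      rw [fc_one, fc_one]
      norm_num
  | (m+2) =>
    rw [Finset.Nat.antidiagonal_succ, Finset.sum_cons, Finset.sum_map]
    simp only [Function.Embedding.coe_prodMap, Function.Embedding.coeFn_mk,
      Function.Embedding.refl_apply, Prod.map_apply]
    rw [Finset.Nat.antidiagonal_succ', Finset.sum_cons, Finset.sum_map]
    simp only [Function.Embedding.coe_prodMap, Function.Embedding.coeFn_mk,
      Function.Embedding.refl_apply, Prod.map_apply, Prod.map_fst, Prod.map_snd,
      id_eq, Nat.succ_eq_add_one]
    have hmid : ∑ p ∈ antidiagonal m, ∑ q ∈ antidiagonal j, fc (p.1+1) q.1 * fc (p.2+1) q.2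
        = (catalan (m+1) : ℚ) * ((2*m + 1 + j).choose j) / 2^m := by
      have step : ∀ p ∈ antidiagonal m, ∑ q ∈ antidiagonal j, fc (p.1+1) q.1 * fc (p.2+1) q.2
          = ((catalan p.1 : ℚ) * catalan p.2) * (((2*m + 1 + j).choose j : ℚ) / 2^m) := by
        intro p hp
        have hp' : p.1 + p.2 = m := Finset.HasAntidiagonal.mem_antidiagonal.mp hp
        rw [inner_mid]
        rw [show 2*p.1 + 2*p.2 + 1 + j = 2*m + 1 + j by omega, show p.1 + p.2 = m from hp']
        ring
      rw [Finset.sum_congr rfl step, ← Finset.sum_mul]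
      have : ∑ p ∈ antidiagonal m, (catalan p.1 : ℚ) * catalan p.2 = (catalan (m+1) : ℚ) := by
        rw [catalan_succ']
        push_cast
        rfl
      rw [this]
      ring
    rw [hmid]
    have hfalse1 : ¬ (m + 2 = 1 ∧ j = 0) := by omega
    have hfalse2 : ¬ (m + 2 = 0 ∧ j = 1) := by omega
    have hfalse3 : ¬ (m + 2 = 0 ∧ j = 2) := by omega
    rw [if_neg hfalse1, if_neg hfalse2, if_neg hfalse3]
    match j with
    | 0 =>
      rw [inner_left_zero, inner_right_zero]
      rw [fc_succ]
      norm_num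
      rw [pow_succ]
      ring
    | (j'+1) =>
      rw [inner_left_succ, inner_right_succ]
      rw [fc_succ, fc_succ]
      have hps : ((2*(m+1) + (j'+1)).choose (j'+1) : ℚ)
          = ((2*m + 1 + (j'+1)).choose j' : ℚ) + ((2*m + 1 + (j'+1)).choose (j'+1) : ℚ) := by
        have := Nat.choose_succ_succ (2*m + 2 + j') j'
        rw [show 2*(m+1) + (j'+1) = 2*m+2+j'+1 by ring, show 2*m+1+(j'+1) = 2*m+2+j' by ring]
        exact_mod_cast this
      rw [show 2*(m+1) + j' = 2*m + 1 + (j'+1) by ring] at *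
      rw [hps, pow_succ]
      ring

open MvPowerSeries in
lemma coeff_S_eq (S : MvPowerSeries (Fin 2) ℚ)
    (hS0 : constantCoeff S = 0)
    (hS : (1 - S) ^ 2 = 1 - 2 * X 0 - 2 * X 1 + (X 1) ^ 2) :
    ∀ i j : ℕ, MvPowerSeries.coeff (dd i j) S = fc i j := by
  have c00 : MvPowerSeries.coeff (dd 0 0) S = 0 := by
    have h0 : dd 0 0 = 0 := by simp [dd]
    rw [h0, MvPowerSeries.coeff_zero_eq_constantCoeff, hS0]
  have hS' : (1 : MvPowerSeries (Fin 2) ℚ) + S * S + (X 0 + X 0) + (X 1 + X 1)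
      = 1 + (X 1) ^ 2 + (S + S) := by linear_combination hS
  have main : ∀ N i j, i + j = N → MvPowerSeries.coeff (dd i j) S = fc i j := by
    intro N
    induction N using Nat.strong_induction_on with
    | _ N IH =>
      intro i j hij
      have h := congrArg (MvPowerSeries.coeff (dd i j)) hS'
      simp only [map_add, MvPowerSeries.coeff_one, MvPowerSeries.coeff_X,
        MvPowerSeries.coeff_X_pow, coeff_mul_dd, dd_eq_zero_iff, dd_eq_single0_iff,
        dd_eq_single1_iff] at h
      have hconv : (∑ p ∈ Finset.HasAntidiagonal.antidiagonal i ×ˢ Finset.HasAntidiagonal.antidiagonal j,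
            MvPowerSeries.coeff (dd p.1.1 p.2.1) S * MvPowerSeries.coeff (dd p.1.2 p.2.2) S)
          = ∑ p ∈ Finset.HasAntidiagonal.antidiagonal i ×ˢ Finset.HasAntidiagonal.antidiagonal j,
            fc p.1.1 p.2.1 * fc p.1.2 p.2.2 := by
        refine Finset.sum_congr rfl fun p hp => ?_
        rw [Finset.mem_product, Finset.HasAntidiagonal.mem_antidiagonal, Finset.HasAntidiagonal.mem_antidiagonal] at hp
        by_cases h1 : p.1.1 = 0 ∧ p.2.1 = 0
        · rw [h1.1, h1.2, c00, fc_zero_zero, zero_mul, zero_mul]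
        · by_cases h2 : p.1.2 = 0 ∧ p.2.2 = 0
          · rw [h2.1, h2.2, c00, fc_zero_zero, mul_zero, mul_zero]
          · have l1 : p.1.1 + p.2.1 < N := by omega
            have l2 : p.1.2 + p.2.2 < N := by omega
            rw [IH _ l1 _ _ rfl, IH _ l2 _ _ rfl]
      rw [hconv, conv_id] at h
      linarith [h]
  exact fun i j => main (i + j) i j rfl

open Nat in
lemma fc_recurrence (m : ℕ) :
    2 * ((m:ℚ) + 1 + 1) ^ 2 * fc (m + 2) (m + 2)
      = 3 * (3 * ((m:ℚ) + 1) - 1) * (3 * ((m:ℚ) + 1) + 1) * fc (m + 1) (m + 1) := by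
  rw [fc_succ, fc_succ]
  rw [show 2*(m+1) + (m+2) = 3*m+4 by ring, show 2*m + (m+1) = 3*m+1 by ring]
  -- ℕ facts
  have hA : (m+2) * catalan (m+1) * ((m+1)! * (m+1)!) = (2*m+2)! := by
    have h1 : (m + 1 + 1) * catalan (m+1) = Nat.centralBinom (m+1) :=
      succ_mul_catalan_eq_centralBinom (m+1)
    have h2 : ((m+1)+(m+1)).choose (m+1) * (m+1)! * (m+1)! = ((m+1)+(m+1))! :=
      Nat.add_choose_mul_factorial_mul_factorial (m+1) (m+1)
    have h3 : Nat.centralBinom (m+1) = ((m+1)+(m+1)).choose (m+1) := by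
      rw [Nat.centralBinom]; congr 1; ring
    calc (m+2) * catalan (m+1) * ((m+1)! * (m+1)!)
        = ((m + 1 + 1) * catalan (m+1)) * ((m+1)! * (m+1)!) := by ring
      _ = ((m+1)+(m+1)).choose (m+1) * (m+1)! * (m+1)! := by rw [h1, h3]; ring
      _ = ((m+1)+(m+1))! := h2
      _ = (2*m+2)! := by congr 1; ring
  have hB : (m+1) * catalan m * (m ! * m !) = (2*m)! := by
    have h1 : (m + 1) * catalan m = Nat.centralBinom m :=
      succ_mul_catalan_eq_centralBinom m
    have h2 : (m+m).choose m * m ! * m ! = (m+m)! :=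
      Nat.add_choose_mul_factorial_mul_factorial m m
    have h3 : Nat.centralBinom m = (m+m).choose m := by
      rw [Nat.centralBinom]; congr 1; ring
    calc (m+1) * catalan m * (m ! * m !)
        = ((m+1) * catalan m) * (m ! * m !) := by ring
      _ = (m+m).choose m * m ! * m ! := by rw [h1, h3]; ring
      _ = (m+m)! := h2
      _ = (2*m)! := by congr 1; ring
  have hC : (3*m+4).choose (m+2) * (m+2)! * (2*m+2)! = (3*m+4)! := by
    have t := Nat.add_choose_mul_factorial_mul_factorial (2*m+2) (m+2)
    rw [show (2*m+2) + (m+2) = 3*m+4 by ring] at t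
    calc (3*m+4).choose (m+2) * (m+2)! * (2*m+2)!
        = (3*m+4).choose (m+2) * (2*m+2)! * (m+2)! := by ring
      _ = (3*m+4)! := t
  have hD : (3*m+1).choose (m+1) * (m+1)! * (2*m)! = (3*m+1)! := by
    have t := Nat.add_choose_mul_factorial_mul_factorial (2*m) (m+1)
    rw [show (2*m) + (m+1) = 3*m+1 by ring] at t
    calc (3*m+1).choose (m+1) * (m+1)! * (2*m)!
        = (3*m+1).choose (m+1) * (2*m)! * (m+1)! := by ring
      _ = (3*m+1)! := t
  -- cast to ℚ
  have hAq : ((m:ℚ)+2) * (catalan (m+1) : ℚ) * (((m+1)! : ℚ) * ((m+1)! : ℚ)) = ((2*m+2)! : ℚ) := by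
    exact_mod_cast congrArg (Nat.cast (R := ℚ)) hA
  have hBq : ((m:ℚ)+1) * (catalan m : ℚ) * ((m ! : ℚ) * (m ! : ℚ)) = ((2*m)! : ℚ) := by
    exact_mod_cast congrArg (Nat.cast (R := ℚ)) hB
  have hCq : (((3*m+4).choose (m+2) : ℚ)) * ((m+2)! : ℚ) * ((2*m+2)! : ℚ) = ((3*m+4)! : ℚ) := by
    exact_mod_cast congrArg (Nat.cast (R := ℚ)) hC
  have hDq : (((3*m+1).choose (m+1) : ℚ)) * ((m+1)! : ℚ) * ((2*m)! : ℚ) = ((3*m+1)! : ℚ) := by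
    exact_mod_cast congrArg (Nat.cast (R := ℚ)) hD
  have e1 : ((2*m+2)! : ℚ) = ((2*m:ℚ)+2) * ((2*m:ℚ)+1) * ((2*m)! : ℚ) := by
    rw [show 2*m+2 = (2*m+1)+1 by ring, Nat.factorial_succ, show 2*m+1 = (2*m)+1 by ring,
      Nat.factorial_succ]
    push_cast
    ring
  have e2 : ((m+2)! : ℚ) = ((m:ℚ)+2) * ((m:ℚ)+1) * (m ! : ℚ) := by
    rw [show m+2 = (m+1)+1 by ring, Nat.factorial_succ, Nat.factorial_succ]
    push_cast
    ring
  have e3 : ((m+1)! : ℚ) = ((m:ℚ)+1) * (m ! : ℚ) := by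
    rw [Nat.factorial_succ]
    push_cast
    ring
  have e4 : ((3*m+4)! : ℚ) = (3*(m:ℚ)+4) * (3*(m:ℚ)+3) * (3*(m:ℚ)+2) * ((3*m+1)! : ℚ) := by
    rw [show 3*m+4 = (3*m+3)+1 by ring, Nat.factorial_succ, show 3*m+3 = (3*m+2)+1 by ring,
      Nat.factorial_succ, show 3*m+2 = (3*m+1)+1 by ring, Nat.factorial_succ]
    push_cast
    ring
  have hm1 : ((m:ℚ)+1) ≠ 0 := by positivity
  have hm2 : ((m:ℚ)+2) ≠ 0 := by positivity
  have hfm : (m ! : ℚ) ≠ 0 := by exact_mod_cast Nat.factorial_ne_zero m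
  have hf2m : ((2*m)! : ℚ) ≠ 0 := by exact_mod_cast Nat.factorial_ne_zero (2*m)
  have hf3m : ((3*m+1)! : ℚ) ≠ 0 := by exact_mod_cast Nat.factorial_ne_zero (3*m+1)
  have hpow : (2:ℚ)^m ≠ 0 := by positivity
  -- solve for the four quantities
  have q1 : (catalan (m+1) : ℚ) = ((2*m)! : ℚ) * (((2*m:ℚ)+2) * ((2*m:ℚ)+1))
      / (((m:ℚ)+2) * (((m:ℚ)+1) * (m ! : ℚ) * (((m:ℚ)+1) * (m ! : ℚ)))) := by
    rw [eq_div_iff (by positivity)]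
    rw [e3, e1] at hAq
    linear_combination hAq
  have q2 : (catalan m : ℚ) = ((2*m)! : ℚ) / (((m:ℚ)+1) * ((m ! : ℚ) * (m ! : ℚ))) := by
    rw [eq_div_iff (by positivity)]
    linear_combination hBq
  have q3 : (((3*m+4).choose (m+2) : ℚ)) = (3*(m:ℚ)+4) * (3*(m:ℚ)+3) * (3*(m:ℚ)+2) * ((3*m+1)! : ℚ)
      / ((((m:ℚ)+2) * ((m:ℚ)+1) * (m ! : ℚ)) * (((2*m:ℚ)+2) * ((2*m:ℚ)+1) * ((2*m)! : ℚ))) := by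
    rw [eq_div_iff (by positivity)]
    rw [e2, e1, e4] at hCq
    linear_combination hCq
  have q4 : (((3*m+1).choose (m+1) : ℚ)) = ((3*m+1)! : ℚ)
      / ((((m:ℚ)+1) * (m ! : ℚ)) * ((2*m)! : ℚ)) := by
    rw [eq_div_iff (by positivity)]
    rw [e3] at hDq
    linear_combination hDq
  rw [q1, q2, q3, q4]
  rw [pow_succ]
  field_simp
  ring

open MvPowerSeries in
/-- The diagonal coefficients `aₙ = [xⁿyⁿ](1 - √(1 - 2x - 2y + y²))` satisfy
`a₀ = 0`, `a₁ = 1`, and `2(n+1)² a_{n+1} = 3(3n-1)(3n+1) aₙ` for `n ≥ 1`. -/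
theorem diag_coeff_recurrence (S : MvPowerSeries (Fin 2) ℚ)
    (hS0 : constantCoeff S = 0)
    (hS : (1 - S) ^ 2 = 1 - 2 * X 0 - 2 * X 1 + (X 1) ^ 2)
    (a : ℕ → ℚ)
    (ha : ∀ n, a n = coeff (Finsupp.single 0 n + Finsupp.single 1 n) S) :
    a 0 = 0 ∧ a 1 = 1 ∧ ∀ n : ℕ, 1 ≤ n →
      2 * (n + 1) ^ 2 * a (n + 1) = 3 * (3 * n - 1) * (3 * n + 1) * a n := by
  have hfc : ∀ n, a n = fc n n := by
    intro n
    rw [ha n]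
    exact coeff_S_eq S hS0 hS n n
  refine ⟨by rw [hfc 0, fc_zero]; norm_num, by rw [hfc 1, fc_one], ?_⟩
  intro n hn
  obtain ⟨m, rfl⟩ : ∃ m, n = m + 1 := ⟨n - 1, by omega⟩
  rw [hfc, hfc]
  have := fc_recurrence m
  push_cast
  push_cast at this
  convert this using 2
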